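/- Let I and J be adjacent facets of a subword complex SC(Q,ρ) with I∖{i} = J∖{j}. Then j is the unique position in the complement of I such that r(I,j) ∈ {r(I,i), −r(I,i)}. Moreover, r(I,i) = r(I,j) is a positive root if i < j, while r(I,i) = −r(I,j) is a negative root if i > j. -/

import Mathlib

open scoped RealInnerProductSpace

variable {V : Type*} [NormedAddCommGroup V] [InnerProductSpace ℝ V] [FiniteDimensional ℝ V]

/-- The orthogonal reflection interchanging `v` and `-v` and fixing the hyperplane `v^⊥`
pointwise (reflection through the subspace `(ℝ∙v)ᗮ`). -/
noncomputable def reflAlong (v : V) : V ≃ₗᵢ[ℝ] V :=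
  Submodule.reflection (Submodule.span ℝ {v})ᗮ

/-- A finite (essential) reflection group on a Euclidean vector space, together with a
root system and a generic linear functional selecting the positive roots.  This is the
setting of a finite Coxeter system realized geometrically. -/
structure FiniteRootSystem (V : Type*) [NormedAddCommGroup V] [InnerProductSpace ℝ V]
    [FiniteDimensional ℝ V] where
  /-- The reflection group `W`, a subgroup of the orthogonal group. -/
  W : Subgroup (V ≃ₗᵢ[ℝ] V)
  /-- `W` is finite. -/
  finW : Finite W
  /-- The root system `Φ`. -/
  Φ : Set V
  ne_zero : ∀ β ∈ Φ, β ≠ 0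
  /-- `Φ` is stable under the action of `W`. -/
  stable : ∀ w ∈ W, ∀ β ∈ Φ, w β ∈ Φ
  /-- `Φ` contains two opposite roots orthogonal to each reflection hyperplane. -/
  neg_mem : ∀ β ∈ Φ, -β ∈ Φ
  smul_mem : ∀ β ∈ Φ, ∀ c : ℝ, c • β ∈ Φ → c = 1 ∨ c = -1
  refl_mem : ∀ β ∈ Φ, reflAlong β ∈ W
  refl_surj : ∀ g ∈ W, (∃ v : V, v ≠ 0 ∧ g = reflAlong v) → ∃ β ∈ Φ, g = reflAlong β
  /-- `W` is generated by the reflections along the roots. -/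
  gen : W = Subgroup.closure {g | ∃ β ∈ Φ, g = reflAlong β}
  /-- The intersection of the reflecting hyperplanes is reduced to `0`. -/
  essential : ∀ v : V, (∀ β ∈ Φ, ⟪β, v⟫ = 0) → v = 0
  /-- A linear functional not vanishing on any root, splitting `Φ` into positive and
  negative roots. -/
  f : V →ₗ[ℝ] ℝ
  f_ne : ∀ β ∈ Φ, f β ≠ 0

namespace FiniteRootSystem

variable (R : FiniteRootSystem V)

/-- The positive roots. -/
def PosRoots : Set V := {β ∈ R.Φ | 0 < R.f β}

/-- The negative roots. -/
def NegRoots : Set V := {β ∈ R.Φ | R.f β < 0}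

/-- The cone generated by the positive roots. -/
def InPosCone (v : V) : Prop :=
  ∃ (s : Finset V) (c : V → ℝ), ↑s ⊆ R.PosRoots ∧ (∀ x ∈ s, 0 ≤ c x) ∧
    v = ∑ x ∈ s, c x • x

/-- The simple roots: the roots lying on the extremal rays of the cone generated by the
positive roots. -/
def IsSimpleRoot (β : V) : Prop :=
  β ∈ R.PosRoots ∧
    ∀ x y : V, R.InPosCone x → R.InPosCone y → β = x + y → ∃ a : ℝ, 0 ≤ a ∧ x = a • β

/-- The inversion set `inv(w) = Φ⁺ ∩ w(Φ⁻)` of `w`: the positive roots sent to negative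
roots by `w⁻¹`. -/
def invSet (w : V ≃ₗᵢ[ℝ] V) : Set V :=
  {β ∈ R.PosRoots | w.symm β ∈ R.NegRoots}

/-- The length of `w`: the smallest number of simple reflections needed to write `w`. -/
noncomputable def len (w : V ≃ₗᵢ[ℝ] V) : ℕ :=
  sInf {n | ∃ L : List V, L.length = n ∧ (∀ β ∈ L, R.IsSimpleRoot β) ∧
    (L.map reflAlong).prod = w}

end FiniteRootSystem

section SubwordComplex

open FiniteRootSystem

variable {V : Type*} [NormedAddCommGroup V] [InnerProductSpace ℝ V] [FiniteDimensional ℝ V]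

/-- The product of the reflections of the letters of the word `Q` at the positions in `X`,
taken in increasing order of positions. -/
noncomputable def prodQ {m : ℕ} (Q : Fin m → V) (X : Finset (Fin m)) : V ≃ₗᵢ[ℝ] V :=
  ((X.sort (· ≤ ·)).map (fun k => reflAlong (Q k))).prod

/-- A facet of the subword complex `SC(Q, ρ)`: a set of positions whose complement forms
a reduced expression for `ρ` as a subword of `Q`.  Here the word `Q` is recorded by the
simple roots of its letters, the corresponding simple reflections being `reflAlong (Q k)`. -/
def IsSCFacet (R : FiniteRootSystem V) {m : ℕ} (Q : Fin m → V) (ρ : V ≃ₗᵢ[ℝ] V)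
    (I : Finset (Fin m)) : Prop :=
  prodQ Q Iᶜ = ρ ∧ Iᶜ.card = R.len ρ

/-- The root function of a facet `I`: `r(I, k) = Π Q_{[k−1]∖I} (α_{q_k})`. -/
noncomputable def rootf {m : ℕ} (Q : Fin m → V) (I : Finset (Fin m)) (k : Fin m) : V :=
  prodQ Q (Finset.univ.filter (fun x => x < k ∧ x ∉ I)) (Q k)

end SubwordComplex

section AuxRefl
variable {V : Type*} [NormedAddCommGroup V] [InnerProductSpace ℝ V] [FiniteDimensional ℝ V]

theorem reflAlong_apply (v x : V) :
    reflAlong v x = x - (2 * ⟪v, x⟫ / ⟪v, v⟫) • v := by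
  rw [reflAlong, Submodule.reflection_orthogonal_apply, Submodule.reflection_singleton_apply,
    real_inner_self_eq_norm_sq, neg_sub]
  simp only [RCLike.ofReal_real_eq_id, id_eq]
  module

theorem reflAlong_self (v : V) : reflAlong v v = -v :=
  Submodule.reflection_orthogonalComplement_singleton_eq_neg v

theorem reflAlong_sq (v : V) : reflAlong v * reflAlong v = 1 := by
  ext x
  exact Submodule.reflection_reflection ((Submodule.span ℝ {v})ᗮ) x

theorem reflAlong_inv (v : V) : (reflAlong v)⁻¹ = reflAlong v :=
  inv_eq_of_mul_eq_one_left (reflAlong_sq v)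

theorem reflAlong_conj (g : V ≃ₗᵢ[ℝ] V) (v : V) :
    reflAlong (g v) = g * reflAlong v * g⁻¹ := by
  ext x
  have h1 : (g * reflAlong v * g⁻¹) x = g (reflAlong v (g.symm x)) := rfl
  rw [h1, reflAlong_apply, reflAlong_apply, map_sub, map_smul, g.apply_symm_apply]
  rw [← g.inner_map_map v (g.symm x), g.apply_symm_apply, g.inner_map_map v v]

theorem reflAlong_neg (v : V) : reflAlong (-v) = reflAlong v := by
  ext x
  rw [reflAlong_apply, reflAlong_apply, inner_neg_neg, inner_neg_left]
  rw [show (2 * -⟪v,x⟫ / ⟪v,v⟫) • (-v) = (2 * ⟪v,x⟫ / ⟪v,v⟫) • v by module]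

theorem reflAlong_eq_smul {v w : V} (hv : v ≠ 0) (h : reflAlong v = reflAlong w) :
    w = (⟪v, w⟫ / ⟪v, v⟫) • v := by
  have h1 : reflAlong v w = -w := by rw [h]; exact reflAlong_self w
  rw [reflAlong_apply] at h1
  have h2 : w + w = (2 * ⟪v, w⟫ / ⟪v, v⟫) • v := by
    have h3 : w + w - (2 * ⟪v, w⟫ / ⟪v, v⟫) • v = 0 := by
      rw [show w + w - (2 * ⟪v, w⟫ / ⟪v, v⟫) • v
          = (w - (2 * ⟪v, w⟫ / ⟪v, v⟫) • v) - (-w) by abel, h1, sub_self]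
    exact sub_eq_zero.mp h3
  have h4 : w = ((2:ℝ)⁻¹ * (2 * ⟪v, w⟫ / ⟪v, v⟫)) • v := by
    rw [mul_smul, ← h2, show (2:ℝ)⁻¹ • (w + w) = w by module]
  rw [show (2:ℝ)⁻¹ * (2 * ⟪v, w⟫ / ⟪v, v⟫) = ⟪v, w⟫ / ⟪v, v⟫ from by ring] at h4
  exact h4

end AuxRefl

section AuxRoots
open FiniteRootSystem
variable {V : Type*} [NormedAddCommGroup V] [InnerProductSpace ℝ V] [FiniteDimensional ℝ V]
variable (R : FiniteRootSystem V)

theorem aux_pos_mem_Φ {β : V} (h : β ∈ R.PosRoots) : β ∈ R.Φ := h.1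

theorem aux_pos_f {β : V} (h : β ∈ R.PosRoots) : 0 < R.f β := h.2

theorem aux_pos_or_neg {β : V} (h : β ∈ R.Φ) : β ∈ R.PosRoots ∨ β ∈ R.NegRoots := by
  rcases lt_or_gt_of_ne (R.f_ne β h) with h' | h'
  · exact Or.inr ⟨h, h'⟩
  · exact Or.inl ⟨h, h'⟩

theorem aux_neg_of_pos {β : V} (h : β ∈ R.PosRoots) : -β ∈ R.NegRoots :=
  ⟨R.neg_mem β h.1, by rw [map_neg]; linarith [h.2]⟩

theorem aux_root_ne_zero {β : V} (h : β ∈ R.Φ) : β ≠ 0 := R.ne_zero β h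

theorem aux_inPosCone_single {β : V} (h : β ∈ R.PosRoots) (c : ℝ) (hc : 0 ≤ c) :
    R.InPosCone (c • β) := by
  refine ⟨{β}, fun _ => c, ?_, fun x _ => hc, by simp⟩
  simpa using h

/-- A simple reflection sends any positive root other than the simple root itself to a
positive root. -/
theorem aux_simple_reflect_pos {α β : V} (hα : R.IsSimpleRoot α) (hβ : β ∈ R.PosRoots)
    (hne : β ≠ α) : reflAlong α β ∈ R.PosRoots := by
  have hαΦ : α ∈ R.Φ := hα.1.1
  have hw : reflAlong α ∈ R.W := R.refl_mem α hαΦ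
  have hγΦ : reflAlong α β ∈ R.Φ := R.stable _ hw β hβ.1
  rcases aux_pos_or_neg R hγΦ with hp | hn
  · exact hp
  exfalso
  set γ := reflAlong α β with hγ
  set c : ℝ := 2 * ⟪α, β⟫ / ⟪α, α⟫ with hc
  have hβγ : β - γ = c • α := by rw [hγ, reflAlong_apply]; abel
  have hcf : c * R.f α = R.f β - R.f γ := by
    rw [← smul_eq_mul, ← map_smul, ← hβγ, map_sub]
  have hcpos : 0 < c := by
    have h1 : 0 < R.f β - R.f γ := by linarith [hβ.2, hn.2]
    have h2 : 0 < R.f α := hα.1.2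
    nlinarith
  have hαsum : α = c⁻¹ • β + c⁻¹ • (-γ) := by
    rw [← smul_add, show β + -γ = β - γ by abel, hβγ, smul_smul, inv_mul_cancel₀ hcpos.ne',
      one_smul]
  have hx : R.InPosCone (c⁻¹ • β) := aux_inPosCone_single R hβ _ (by positivity)
  have hy : R.InPosCone (c⁻¹ • (-γ)) := by
    refine aux_inPosCone_single R ⟨R.neg_mem _ hγΦ, ?_⟩ _ (by positivity)
    rw [map_neg]; linarith [hn.2]
  obtain ⟨a, ha0, hxa⟩ := hα.2 _ _ hx hy hαsum
  have hβa : β = (c * a) • α := by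
    have := congrArg (fun z => c • z) hxa
    simpa [smul_smul, mul_inv_cancel₀ hcpos.ne', mul_comm] using this
  rcases R.smul_mem α hαΦ (c * a) (hβa ▸ hβ.1) with h1 | h1
  · exact hne (by rw [hβa, h1, one_smul])
  · nlinarith

/-- If a simple reflection makes a positive root non-positive, the root is the simple root. -/
theorem aux_eq_simple_of_not_pos {α γ : V} (hα : R.IsSimpleRoot α) (hγ : γ ∈ R.PosRoots)
    (h : reflAlong α γ ∉ R.PosRoots) : γ = α := by
  by_contra hne
  exact h (aux_simple_reflect_pos R hα hγ hne)

end AuxRoots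

section AuxWords
open FiniteRootSystem
variable {V : Type*} [NormedAddCommGroup V] [InnerProductSpace ℝ V] [FiniteDimensional ℝ V]

/-- The product of the reflections along the entries of a list of roots. -/
noncomputable def piW (L : List V) : V ≃ₗᵢ[ℝ] V := (L.map reflAlong).prod

theorem piW_nil : piW ([] : List V) = 1 := rfl

theorem piW_cons (α : V) (L : List V) : piW (α :: L) = reflAlong α * piW L := by
  simp [piW]

theorem piW_append (L M : List V) : piW (L ++ M) = piW L * piW M := by
  simp [piW]

theorem piW_singleton (α : V) : piW [α] = reflAlong α := by simp [piW]

variable (R : FiniteRootSystem V)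

/-- All entries of the list are simple roots. -/
def SimpleList (L : List V) : Prop := ∀ β ∈ L, R.IsSimpleRoot β

theorem aux_piW_mem_W {L : List V} (hL : SimpleList R L) : piW L ∈ R.W := by
  refine Subgroup.list_prod_mem _ ?_
  intro x hx
  rw [List.mem_map] at hx
  obtain ⟨β, hβ, rfl⟩ := hx
  exact R.refl_mem β (hL β hβ).1.1

theorem aux_len_le {L : List V} (hL : SimpleList R L) : R.len (piW L) ≤ L.length :=
  Nat.sInf_le ⟨L, rfl, hL, rfl⟩

/-- `L` is a reduced word made of simple roots. -/
def IsRWord (L : List V) : Prop := SimpleList R L ∧ L.length = R.len (piW L)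

theorem aux_exists_min {L : List V} (hL : SimpleList R L) :
    ∃ M : List V, M.length = R.len (piW L) ∧ SimpleList R M ∧ piW M = piW L := by
  have hne : {n | ∃ L' : List V, L'.length = n ∧ (∀ β ∈ L', R.IsSimpleRoot β) ∧
      (L'.map reflAlong).prod = piW L}.Nonempty := ⟨L.length, L, rfl, hL, rfl⟩
  obtain ⟨M, hM1, hM2, hM3⟩ := Nat.sInf_mem hne
  exact ⟨M, hM1, hM2, hM3⟩

theorem aux_not_shorter {L M : List V} (hL : IsRWord R L) (hM : SimpleList R M)
    (h : piW M = piW L) : L.length ≤ M.length := by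
  calc L.length = R.len (piW L) := hL.2
  _ = R.len (piW M) := by rw [h]
  _ ≤ M.length := aux_len_le R hM

theorem aux_infix (L₁ L₂ L₃ : List V) (h : IsRWord R (L₁ ++ L₂ ++ L₃)) : IsRWord R L₂ := by
  have hs : SimpleList R L₂ := fun β hβ => h.1 β (by simp [hβ])
  refine ⟨hs, le_antisymm ?_ (aux_len_le R hs)⟩
  obtain ⟨M, hM1, hM2, hM3⟩ := aux_exists_min R hs
  rw [← hM1]
  by_contra hlt
  push_neg at hlt
  have hsim : SimpleList R (L₁ ++ M ++ L₃) := by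
    intro β hβ
    simp only [List.mem_append] at hβ
    rcases hβ with (hβ | hβ) | hβ
    · exact h.1 β (by simp [hβ])
    · exact hM2 β hβ
    · exact h.1 β (by simp [hβ])
  have hprod : piW (L₁ ++ M ++ L₃) = piW (L₁ ++ L₂ ++ L₃) := by
    simp [piW_append, hM3]
  have hll := aux_not_shorter R h hsim hprod
  simp only [List.length_append] at hll
  omega

theorem aux_posA : ∀ (L₁ : List V) (α : V), R.IsSimpleRoot α → IsRWord R (L₁ ++ [α]) →
    (piW L₁) α ∈ R.PosRoots := by
  intro L₁
  induction L₁ with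
  | nil =>
    intro α hα _
    simpa [piW_nil] using hα.1
  | cons β L' ih =>
    intro α hα h
    have hβ : R.IsSimpleRoot β := h.1 β (by simp)
    have h' : IsRWord R (L' ++ [α]) := aux_infix R [β] (L' ++ [α]) [] (by simpa using h)
    have hγ : (piW L') α ∈ R.PosRoots := ih α hα h'
    rw [piW_cons]
    rcases eq_or_ne ((piW L') α) β with heq | hne
    · exfalso
      have hconj : reflAlong β = piW L' * reflAlong α * (piW L')⁻¹ := by
        rw [← heq]; exact reflAlong_conj (piW L') α
      have hprod : piW L' = piW ((β :: L') ++ [α]) := by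
        show piW L' = piW (β :: (L' ++ [α]))
        rw [piW_cons, piW_append, piW_singleton, hconj]
        have e : piW L' * reflAlong α * (piW L')⁻¹ * (piW L' * reflAlong α)
            = piW L' * (reflAlong α * reflAlong α) := by group
        rw [e, reflAlong_sq, mul_one]
      have hsim : SimpleList R L' := fun δ hδ => h'.1 δ (by simp [hδ])
      have hll := aux_not_shorter R h hsim hprod
      simp only [List.length_append, List.length_cons, List.length_singleton] at hll
      omega
    · exact aux_simple_reflect_pos R hβ hγ hne


theorem aux_distinctB (L₁ L₂ L₃ : List V) (α β : V)
    (h : IsRWord R (L₁ ++ α :: (L₂ ++ β :: L₃))) :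
    reflAlong ((piW L₁) α) ≠ reflAlong ((piW (L₁ ++ α :: L₂)) β) := by
  intro heq
  rw [reflAlong_conj (piW L₁) α, reflAlong_conj (piW (L₁ ++ α :: L₂)) β] at heq
  have hual : piW (L₁ ++ α :: L₂) = piW L₁ * (reflAlong α * piW L₂) := by
    rw [piW_append, piW_cons]
  rw [hual] at heq
  have e1 : piW L₁ * reflAlong α * (piW L₁)⁻¹ * (piW L₁ * (reflAlong α * piW L₂))
      = piW L₁ * (reflAlong α * piW L₂) * reflAlong β := by
    rw [heq]; group
  have e2 : piW L₁ * reflAlong α * (piW L₁)⁻¹ * (piW L₁ * (reflAlong α * piW L₂))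
      = piW L₁ * (reflAlong α * reflAlong α) * piW L₂ := by group
  have e3 : piW L₁ * piW L₂ = piW L₁ * (reflAlong α * piW L₂) * reflAlong β := by
    rw [← e1, e2, reflAlong_sq, mul_one]
  have e4 : piW L₁ * (reflAlong α * piW L₂) = piW L₁ * (piW L₂ * reflAlong β) := by
    have e5 := congrArg (· * reflAlong β) e3
    rw [mul_assoc (piW L₁ * (reflAlong α * piW L₂)) _ _, reflAlong_sq, mul_one] at e5
    rw [← e5]; group
  have hav := mul_left_cancel e4
  have hprod : piW (L₁ ++ (L₂ ++ L₃)) = piW (L₁ ++ α :: (L₂ ++ β :: L₃)) := by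
    simp only [piW_append, piW_cons]
    rw [← mul_assoc (reflAlong α) (piW L₂), hav]
    have e6 : piW L₂ * reflAlong β * (reflAlong β * piW L₃)
        = piW L₂ * (reflAlong β * reflAlong β) * piW L₃ := by group
    rw [e6, reflAlong_sq, mul_one]
  have hsim : SimpleList R (L₁ ++ (L₂ ++ L₃)) := by
    intro δ hδ
    apply h.1 δ
    simp only [List.mem_append, List.mem_cons] at hδ ⊢
    tauto
  have hll := aux_not_shorter R h hsim hprod
  simp only [List.length_append, List.length_cons] at hll
  omega

end AuxWords

section AuxSort
open FiniteRootSystem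
variable {V : Type*} [NormedAddCommGroup V] [InnerProductSpace ℝ V] [FiniteDimensional ℝ V]
variable {m : ℕ}

theorem aux_sort_split (X : Finset (Fin m)) (t : Fin m) :
    X.sort (· ≤ ·) = ((X.filter (fun x => x < t)).sort (· ≤ ·))
      ++ ((X.filter (fun x => ¬ x < t)).sort (· ≤ ·)) := by
  refine (fun hp hs => List.Perm.eq_of_pairwise' (Finset.pairwise_sort _ _) hs hp) ?_ ?_
  · rw [← Multiset.coe_eq_coe, ← Multiset.coe_add]
    rw [Finset.sort_eq, Finset.sort_eq, Finset.sort_eq]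
    rw [Finset.filter_val, Finset.filter_val]
    exact (Multiset.filter_add_not _ _).symm
  · refine List.pairwise_append.mpr ⟨Finset.pairwise_sort _ _, Finset.pairwise_sort _ _, ?_⟩
    intro a ha b hb
    rw [Finset.mem_sort] at ha hb
    have ha' := (Finset.mem_filter.mp ha).2
    have hb' := (Finset.mem_filter.mp hb).2
    exact le_of_lt (lt_of_lt_of_le ha' (not_lt.mp hb'))

theorem aux_filter_not_lt {X : Finset (Fin m)} {t : Fin m} (ht : t ∈ X) :
    X.filter (fun x => ¬ x < t) = insert t (X.filter (fun x => t < x)) := by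
  ext x
  simp only [Finset.mem_filter, Finset.mem_insert, not_lt]
  constructor
  · rintro ⟨hx, hle⟩
    rcases eq_or_lt_of_le hle with h | h
    · exact Or.inl h.symm
    · exact Or.inr ⟨hx, h⟩
  · rintro (rfl | ⟨hx, h⟩)
    · exact ⟨ht, le_refl _⟩
    · exact ⟨hx, h.le⟩

theorem aux_sort_split_mem (X : Finset (Fin m)) {t : Fin m} (ht : t ∈ X) :
    X.sort (· ≤ ·) = ((X.filter (fun x => x < t)).sort (· ≤ ·))
      ++ t :: ((X.filter (fun x => t < x)).sort (· ≤ ·)) := by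
  rw [aux_sort_split X t, aux_filter_not_lt ht, Finset.sort_insert]
  · intro b hb
    exact (Finset.mem_filter.mp hb).2.le
  · simp

theorem aux_prodQ_eq_piW (Q : Fin m → V) (X : Finset (Fin m)) :
    prodQ Q X = piW ((X.sort (· ≤ ·)).map Q) := by
  rw [prodQ, piW, List.map_map]
  rfl

theorem aux_prodQ_split (Q : Fin m → V) (X : Finset (Fin m)) (t : Fin m) :
    prodQ Q X = prodQ Q (X.filter (fun x => x < t))
      * prodQ Q (X.filter (fun x => ¬ x < t)) := by
  rw [prodQ, aux_sort_split X t, List.map_append, List.prod_append]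
  rfl

theorem aux_prodQ_split_mem (Q : Fin m → V) (X : Finset (Fin m)) {t : Fin m} (ht : t ∈ X) :
    prodQ Q X = prodQ Q (X.filter (fun x => x < t)) * reflAlong (Q t)
      * prodQ Q (X.filter (fun x => t < x)) := by
  rw [prodQ, aux_sort_split_mem X ht, List.map_append, List.prod_append, List.map_cons,
    List.prod_cons, mul_assoc]
  rfl

theorem aux_rootf_eq (Q : Fin m → V) (I : Finset (Fin m)) (k : Fin m) :
    rootf Q I k = prodQ Q (Iᶜ.filter (fun x => x < k)) (Q k) := by
  have h : Finset.univ.filter (fun x => x < k ∧ x ∉ I) = Iᶜ.filter (fun x => x < k) := by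
    ext x
    simp only [Finset.mem_filter, Finset.mem_univ, Finset.mem_compl, true_and]
    tauto
  rw [rootf, h]

theorem aux_facet_word (R : FiniteRootSystem V) (Q : Fin m → V)
    (hQ : ∀ k, R.IsSimpleRoot (Q k)) (ρ : V ≃ₗᵢ[ℝ] V) (I : Finset (Fin m))
    (hI : IsSCFacet R Q ρ I) : IsRWord R ((Iᶜ.sort (· ≤ ·)).map Q) := by
  constructor
  · intro β hβ
    rw [List.mem_map] at hβ
    obtain ⟨k, _, rfl⟩ := hβ
    exact hQ k
  · rw [← aux_prodQ_eq_piW, hI.1, List.length_map, Finset.length_sort]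
    exact hI.2

end AuxSort

section AuxFacet
open FiniteRootSystem
variable {V : Type*} [NormedAddCommGroup V] [InnerProductSpace ℝ V] [FiniteDimensional ℝ V]
variable {m : ℕ}

/-- Distinct positions in the complement of a facet have non-conjugate root reflections. -/
theorem aux_rootf_inj (R : FiniteRootSystem V) {Q : Fin m → V} {I : Finset (Fin m)}
    (hIw : IsRWord R ((Iᶜ.sort (· ≤ ·)).map Q)) {k l : Fin m}
    (hk : k ∈ Iᶜ) (hl : l ∈ Iᶜ) (hkl : k < l) :
    reflAlong (rootf Q I k) ≠ reflAlong (rootf Q I l) := by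
  have hl2 : l ∈ Iᶜ.filter (fun x => k < x) := Finset.mem_filter.mpr ⟨hl, hkl⟩
  have hword : (Iᶜ.sort (· ≤ ·)).map Q
      = ((Iᶜ.filter (fun x => x < k)).sort (· ≤ ·)).map Q
        ++ Q k :: ((((Iᶜ.filter (fun x => k < x)).filter (fun x => x < l)).sort (· ≤ ·)).map Q
          ++ Q l :: ((((Iᶜ.filter (fun x => k < x)).filter (fun x => l < x)).sort (· ≤ ·)).map Q)) := by
    rw [aux_sort_split_mem Iᶜ hk, aux_sort_split_mem (Iᶜ.filter (fun x => k < x)) hl2]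
    simp
  rw [hword] at hIw
  have hne := aux_distinctB R _ _ _ (Q k) (Q l) hIw
  have h1 : rootf Q I k
      = (piW (((Iᶜ.filter (fun x => x < k)).sort (· ≤ ·)).map Q)) (Q k) := by
    rw [aux_rootf_eq, aux_prodQ_eq_piW]
  have G1 : (Iᶜ.filter (fun x => x < l)).filter (fun x => x < k)
      = Iᶜ.filter (fun x => x < k) := by
    ext x
    simp only [Finset.mem_filter]
    exact ⟨fun ⟨⟨a, _⟩, c⟩ => ⟨a, c⟩, fun ⟨a, c⟩ => ⟨⟨a, c.trans hkl⟩, c⟩⟩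
  have G2 : (Iᶜ.filter (fun x => x < l)).filter (fun x => k < x)
      = (Iᶜ.filter (fun x => k < x)).filter (fun x => x < l) := by
    ext x
    simp only [Finset.mem_filter]
    tauto
  have hkmem : k ∈ Iᶜ.filter (fun x => x < l) := Finset.mem_filter.mpr ⟨hk, hkl⟩
  have h2 : rootf Q I l
      = (piW ((((Iᶜ.filter (fun x => x < k)).sort (· ≤ ·)).map Q)
          ++ Q k :: ((((Iᶜ.filter (fun x => k < x)).filter (fun x => x < l)).sort (· ≤ ·)).map Q)))
          (Q l) := by
    rw [aux_rootf_eq, aux_prodQ_split_mem Q (Iᶜ.filter (fun x => x < l)) hkmem, G1, G2]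
    rw [piW_append, piW_cons, aux_prodQ_eq_piW, aux_prodQ_eq_piW]
    rfl
  rw [h1, h2] at *
  exact hne

/-- Core computation, case `i < j`. -/
theorem aux_core_lt (R : FiniteRootSystem V) (Q : Fin m → V) (hQ : ∀ k, R.IsSimpleRoot (Q k))
    {I J : Finset (Fin m)} {i j : Fin m} (hi : i ∈ I) (hjIc : j ∈ Iᶜ)
    (hJc : Jᶜ = insert i (Iᶜ.erase j)) (hij : i < j)
    (hprodEq : prodQ Q Iᶜ = prodQ Q Jᶜ)
    (hIw : IsRWord R ((Iᶜ.sort (· ≤ ·)).map Q)) :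
    rootf Q I i = rootf Q I j ∧ rootf Q I j ∈ R.PosRoots := by
  have hiJc : i ∈ Jᶜ := by rw [hJc]; exact Finset.mem_insert_self _ _
  have memJc : ∀ x, x ∈ Jᶜ ↔ x = i ∨ (x ≠ j ∧ x ∈ Iᶜ) := by
    intro x
    rw [hJc]
    simp only [Finset.mem_insert, Finset.mem_erase]
  have E1 : (Iᶜ.filter (fun x => x < j)).filter (fun x => x < i)
      = Iᶜ.filter (fun x => x < i) := by
    ext x
    simp only [Finset.mem_filter]
    exact ⟨fun ⟨⟨a, _⟩, c⟩ => ⟨a, c⟩, fun ⟨a, c⟩ => ⟨⟨a, c.trans hij⟩, c⟩⟩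
  have E2 : (Iᶜ.filter (fun x => x < j)).filter (fun x => ¬ x < i)
      = Iᶜ.filter (fun x => i < x ∧ x < j) := by
    ext x
    simp only [Finset.mem_filter, not_lt]
    constructor
    · rintro ⟨⟨h1, h2⟩, h3⟩
      refine ⟨h1, lt_of_le_of_ne h3 ?_, h2⟩
      rintro rfl
      exact (Finset.mem_compl.mp h1) hi
    · rintro ⟨h1, h2, h3⟩
      exact ⟨⟨h1, h3⟩, h2.le⟩
  have F1 : Jᶜ.filter (fun x => x < i) = Iᶜ.filter (fun x => x < i) := by
    ext x
    simp only [Finset.mem_filter]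
    constructor
    · rintro ⟨hx, h3⟩
      rcases (memJc x).mp hx with rfl | ⟨_, hxI⟩
      · exact absurd h3 (lt_irrefl _)
      · exact ⟨hxI, h3⟩
    · rintro ⟨hx, h3⟩
      refine ⟨(memJc x).mpr (Or.inr ⟨?_, hx⟩), h3⟩
      rintro rfl
      exact absurd (h3.trans hij) (lt_irrefl _)
  have F2 : (Jᶜ.filter (fun x => i < x)).filter (fun x => x < j)
      = Iᶜ.filter (fun x => i < x ∧ x < j) := by
    ext x
    simp only [Finset.mem_filter]
    constructor
    · rintro ⟨⟨hx, h2⟩, h3⟩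
      rcases (memJc x).mp hx with rfl | ⟨_, hxI⟩
      · exact absurd h2 (lt_irrefl _)
      · exact ⟨hxI, h2, h3⟩
    · rintro ⟨hx, h2, h3⟩
      exact ⟨⟨(memJc x).mpr (Or.inr ⟨ne_of_lt h3, hx⟩), h2⟩, h3⟩
  have F3 : (Jᶜ.filter (fun x => i < x)).filter (fun x => ¬ x < j)
      = Iᶜ.filter (fun x => j < x) := by
    ext x
    simp only [Finset.mem_filter, not_lt]
    constructor
    · rintro ⟨⟨hx, h2⟩, h3⟩
      rcases (memJc x).mp hx with rfl | ⟨hxj, hxI⟩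
      · exact absurd h2 (lt_irrefl _)
      · exact ⟨hxI, lt_of_le_of_ne h3 (Ne.symm hxj)⟩
    · rintro ⟨hx, h2⟩
      exact ⟨⟨(memJc x).mpr (Or.inr ⟨(ne_of_lt h2).symm, hx⟩), hij.trans h2⟩, h2.le⟩
  have hsplitIc : prodQ Q Iᶜ
      = prodQ Q (Iᶜ.filter (fun x => x < i)) * prodQ Q (Iᶜ.filter (fun x => i < x ∧ x < j))
        * reflAlong (Q j) * prodQ Q (Iᶜ.filter (fun x => j < x)) := by
    rw [aux_prodQ_split_mem Q Iᶜ hjIc, aux_prodQ_split Q (Iᶜ.filter (fun x => x < j)) i, E1, E2]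
  have hsplitJc : prodQ Q Jᶜ
      = prodQ Q (Iᶜ.filter (fun x => x < i)) * (reflAlong (Q i)
        * (prodQ Q (Iᶜ.filter (fun x => i < x ∧ x < j)) * prodQ Q (Iᶜ.filter (fun x => j < x)))) := by
    rw [aux_prodQ_split_mem Q Jᶜ hiJc, aux_prodQ_split Q (Jᶜ.filter (fun x => i < x)) j,
      F1, F2, F3, mul_assoc]
  have hEq := hprodEq
  rw [hsplitIc, hsplitJc] at hEq
  simp only [mul_assoc] at hEq
  have hEq2 := mul_left_cancel hEq
  rw [← mul_assoc, ← mul_assoc] at hEq2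
  have hkey : prodQ Q (Iᶜ.filter (fun x => i < x ∧ x < j)) * reflAlong (Q j)
      = reflAlong (Q i) * prodQ Q (Iᶜ.filter (fun x => i < x ∧ x < j)) :=
    mul_right_cancel hEq2
  have hconj : reflAlong (Q i)
      = reflAlong (prodQ Q (Iᶜ.filter (fun x => i < x ∧ x < j)) (Q j)) := by
    rw [reflAlong_conj, hkey]
    group
  -- positivity of the conjugated root
  have hword : (Iᶜ.sort (· ≤ ·)).map Q
      = ((Iᶜ.filter (fun x => x < i)).sort (· ≤ ·)).map Q
        ++ (((Iᶜ.filter (fun x => i < x ∧ x < j)).sort (· ≤ ·)).map Q ++ [Q j])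
        ++ ((Iᶜ.filter (fun x => j < x)).sort (· ≤ ·)).map Q := by
    rw [aux_sort_split_mem Iᶜ hjIc, aux_sort_split (Iᶜ.filter (fun x => x < j)) i, E1, E2]
    simp
  have hmid : IsRWord R (((Iᶜ.filter (fun x => i < x ∧ x < j)).sort (· ≤ ·)).map Q ++ [Q j]) :=
    aux_infix R _ _ _ (hword ▸ hIw)
  have hpos2 : prodQ Q (Iᶜ.filter (fun x => i < x ∧ x < j)) (Q j) ∈ R.PosRoots := by
    rw [aux_prodQ_eq_piW]
    exact aux_posA R _ (Q j) (hQ j) hmid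
  have hvQj : prodQ Q (Iᶜ.filter (fun x => i < x ∧ x < j)) (Q j) = Q i := by
    have hQi0 : Q i ≠ 0 := R.ne_zero _ (hQ i).1.1
    have hsm := reflAlong_eq_smul hQi0 hconj
    rcases R.smul_mem (Q i) (hQ i).1.1 _ (by rw [← hsm]; exact hpos2.1) with h1 | h1
    · rw [hsm, h1, one_smul]
    · exfalso
      have hfp := hpos2.2
      rw [hsm, h1, neg_one_smul, map_neg] at hfp
      linarith [(hQ i).1.2]
  constructor
  · have hri : rootf Q I i = prodQ Q (Iᶜ.filter (fun x => x < i)) (Q i) := aux_rootf_eq Q I i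
    have hrj : rootf Q I j
        = (prodQ Q (Iᶜ.filter (fun x => x < i))
          * prodQ Q (Iᶜ.filter (fun x => i < x ∧ x < j))) (Q j) := by
      rw [aux_rootf_eq, aux_prodQ_split Q (Iᶜ.filter (fun x => x < j)) i, E1, E2]
    rw [hri, hrj]
    show _ = prodQ Q (Iᶜ.filter (fun x => x < i))
      (prodQ Q (Iᶜ.filter (fun x => i < x ∧ x < j)) (Q j))
    rw [hvQj]
  · have hword2 : (Iᶜ.sort (· ≤ ·)).map Q
        = [] ++ ((((Iᶜ.filter (fun x => x < i)).sort (· ≤ ·)).map Q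
          ++ ((Iᶜ.filter (fun x => i < x ∧ x < j)).sort (· ≤ ·)).map Q) ++ [Q j])
          ++ ((Iᶜ.filter (fun x => j < x)).sort (· ≤ ·)).map Q := by
      rw [hword]; simp
    have hred2 := aux_infix R _ _ _ (hword2 ▸ hIw)
    have hp := aux_posA R _ (Q j) (hQ j) hred2
    have hpi : piW (((Iᶜ.filter (fun x => x < i)).sort (· ≤ ·)).map Q
        ++ ((Iᶜ.filter (fun x => i < x ∧ x < j)).sort (· ≤ ·)).map Q)
        = prodQ Q (Iᶜ.filter (fun x => x < j)) := by
      rw [piW_append, aux_prodQ_split Q (Iᶜ.filter (fun x => x < j)) i, E1, E2,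
        ← aux_prodQ_eq_piW, ← aux_prodQ_eq_piW]
    rw [aux_rootf_eq, aux_prodQ_eq_piW] at *
    rw [← hpi] at *
    exact hp

/-- Core computation, case `j < i`. -/
theorem aux_core_gt (R : FiniteRootSystem V) (Q : Fin m → V) (hQ : ∀ k, R.IsSimpleRoot (Q k))
    {I J : Finset (Fin m)} {i j : Fin m} (hi : i ∈ I) (hjIc : j ∈ Iᶜ)
    (hJc : Jᶜ = insert i (Iᶜ.erase j)) (hij : j < i)
    (hprodEq : prodQ Q Iᶜ = prodQ Q Jᶜ)
    (hIw : IsRWord R ((Iᶜ.sort (· ≤ ·)).map Q))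
    (hJw : IsRWord R ((Jᶜ.sort (· ≤ ·)).map Q)) :
    rootf Q I i = -rootf Q I j ∧ rootf Q I j ∈ R.PosRoots := by
  have hiJc : i ∈ Jᶜ := by rw [hJc]; exact Finset.mem_insert_self _ _
  have memJc : ∀ x, x ∈ Jᶜ ↔ x = i ∨ (x ≠ j ∧ x ∈ Iᶜ) := by
    intro x
    rw [hJc]
    simp only [Finset.mem_insert, Finset.mem_erase]
  have E1 : (Iᶜ.filter (fun x => j < x)).filter (fun x => x < i)
      = Iᶜ.filter (fun x => j < x ∧ x < i) := by
    ext x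
    simp only [Finset.mem_filter]
    tauto
  have E2 : (Iᶜ.filter (fun x => j < x)).filter (fun x => ¬ x < i)
      = Iᶜ.filter (fun x => i < x) := by
    ext x
    simp only [Finset.mem_filter, not_lt]
    constructor
    · rintro ⟨⟨h1, _⟩, h3⟩
      refine ⟨h1, lt_of_le_of_ne h3 ?_⟩
      rintro rfl
      exact (Finset.mem_compl.mp h1) hi
    · rintro ⟨h1, h2⟩
      exact ⟨⟨h1, hij.trans h2⟩, h2.le⟩
  have F1 : (Jᶜ.filter (fun x => x < i)).filter (fun x => x < j)
      = Iᶜ.filter (fun x => x < j) := by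
    ext x
    simp only [Finset.mem_filter]
    constructor
    · rintro ⟨⟨hx, _⟩, h3⟩
      rcases (memJc x).mp hx with rfl | ⟨_, hxI⟩
      · exact absurd (h3.trans hij) (lt_irrefl _)
      · exact ⟨hxI, h3⟩
    · rintro ⟨hx, h3⟩
      exact ⟨⟨(memJc x).mpr (Or.inr ⟨ne_of_lt h3, hx⟩), h3.trans hij⟩, h3⟩
  have F2 : (Jᶜ.filter (fun x => x < i)).filter (fun x => ¬ x < j)
      = Iᶜ.filter (fun x => j < x ∧ x < i) := by
    ext x
    simp only [Finset.mem_filter, not_lt]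
    constructor
    · rintro ⟨⟨hx, h2⟩, h3⟩
      rcases (memJc x).mp hx with rfl | ⟨hxj, hxI⟩
      · exact absurd h2 (lt_irrefl _)
      · exact ⟨hxI, lt_of_le_of_ne h3 (Ne.symm hxj), h2⟩
    · rintro ⟨hx, h2, h3⟩
      exact ⟨⟨(memJc x).mpr (Or.inr ⟨(ne_of_lt h2).symm, hx⟩), h3⟩, h2.le⟩
  have F3 : Jᶜ.filter (fun x => i < x) = Iᶜ.filter (fun x => i < x) := by
    ext x
    simp only [Finset.mem_filter]
    constructor
    · rintro ⟨hx, h2⟩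
      rcases (memJc x).mp hx with rfl | ⟨_, hxI⟩
      · exact absurd h2 (lt_irrefl _)
      · exact ⟨hxI, h2⟩
    · rintro ⟨hx, h2⟩
      exact ⟨(memJc x).mpr (Or.inr ⟨(ne_of_lt (hij.trans h2)).symm, hx⟩), h2⟩
  have hsplitIc : prodQ Q Iᶜ
      = prodQ Q (Iᶜ.filter (fun x => x < j)) * reflAlong (Q j)
        * (prodQ Q (Iᶜ.filter (fun x => j < x ∧ x < i)) * prodQ Q (Iᶜ.filter (fun x => i < x))) := by
    rw [aux_prodQ_split_mem Q Iᶜ hjIc, aux_prodQ_split Q (Iᶜ.filter (fun x => j < x)) i, E1, E2]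
  have hsplitJc : prodQ Q Jᶜ
      = prodQ Q (Iᶜ.filter (fun x => x < j)) * prodQ Q (Iᶜ.filter (fun x => j < x ∧ x < i))
        * reflAlong (Q i) * prodQ Q (Iᶜ.filter (fun x => i < x)) := by
    rw [aux_prodQ_split_mem Q Jᶜ hiJc, aux_prodQ_split Q (Jᶜ.filter (fun x => x < i)) j,
      F1, F2, F3]
  have hEq := hprodEq
  rw [hsplitIc, hsplitJc] at hEq
  simp only [mul_assoc] at hEq
  have hEq2 := mul_left_cancel hEq
  rw [← mul_assoc, ← mul_assoc] at hEq2
  have hkey : reflAlong (Q j) * prodQ Q (Iᶜ.filter (fun x => j < x ∧ x < i))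
      = prodQ Q (Iᶜ.filter (fun x => j < x ∧ x < i)) * reflAlong (Q i) :=
    mul_right_cancel hEq2
  have hconj : reflAlong (Q j)
      = reflAlong (prodQ Q (Iᶜ.filter (fun x => j < x ∧ x < i)) (Q i)) := by
    rw [reflAlong_conj, ← hkey]
    group
  have hwordJ : (Jᶜ.sort (· ≤ ·)).map Q
      = ((Iᶜ.filter (fun x => x < j)).sort (· ≤ ·)).map Q
        ++ (((Iᶜ.filter (fun x => j < x ∧ x < i)).sort (· ≤ ·)).map Q ++ [Q i])
        ++ ((Iᶜ.filter (fun x => i < x)).sort (· ≤ ·)).map Q := by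
    rw [aux_sort_split_mem Jᶜ hiJc, aux_sort_split (Jᶜ.filter (fun x => x < i)) j, F1, F2, F3]
    simp
  have hmid : IsRWord R (((Iᶜ.filter (fun x => j < x ∧ x < i)).sort (· ≤ ·)).map Q ++ [Q i]) :=
    aux_infix R _ _ _ (hwordJ ▸ hJw)
  have hpos2 : prodQ Q (Iᶜ.filter (fun x => j < x ∧ x < i)) (Q i) ∈ R.PosRoots := by
    rw [aux_prodQ_eq_piW]
    exact aux_posA R _ (Q i) (hQ i) hmid
  have hvQi : prodQ Q (Iᶜ.filter (fun x => j < x ∧ x < i)) (Q i) = Q j := by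
    have hQj0 : Q j ≠ 0 := R.ne_zero _ (hQ j).1.1
    have hsm := reflAlong_eq_smul hQj0 hconj
    rcases R.smul_mem (Q j) (hQ j).1.1 _ (by rw [← hsm]; exact hpos2.1) with h1 | h1
    · rw [hsm, h1, one_smul]
    · exfalso
      have hfp := hpos2.2
      rw [hsm, h1, neg_one_smul, map_neg] at hfp
      linarith [(hQ j).1.2]
  have hrj : rootf Q I j = prodQ Q (Iᶜ.filter (fun x => x < j)) (Q j) := aux_rootf_eq Q I j
  constructor
  · have hjmem : j ∈ Iᶜ.filter (fun x => x < i) := Finset.mem_filter.mpr ⟨hjIc, hij⟩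
    have H1 : (Iᶜ.filter (fun x => x < i)).filter (fun x => x < j)
        = Iᶜ.filter (fun x => x < j) := by
      ext x
      simp only [Finset.mem_filter]
      exact ⟨fun ⟨⟨a, _⟩, c⟩ => ⟨a, c⟩, fun ⟨a, c⟩ => ⟨⟨a, c.trans hij⟩, c⟩⟩
    have H2 : (Iᶜ.filter (fun x => x < i)).filter (fun x => j < x)
        = Iᶜ.filter (fun x => j < x ∧ x < i) := by
      ext x
      simp only [Finset.mem_filter]
      tauto
    have hri : rootf Q I i
        = (prodQ Q (Iᶜ.filter (fun x => x < j)) * reflAlong (Q j)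
          * prodQ Q (Iᶜ.filter (fun x => j < x ∧ x < i))) (Q i) := by
      rw [aux_rootf_eq, aux_prodQ_split_mem Q (Iᶜ.filter (fun x => x < i)) hjmem, H1, H2]
    rw [hri, hrj]
    show prodQ Q (Iᶜ.filter (fun x => x < j))
      (reflAlong (Q j) (prodQ Q (Iᶜ.filter (fun x => j < x ∧ x < i)) (Q i))) = _
    rw [hvQi, reflAlong_self, map_neg]
  · have hword2 : (Iᶜ.sort (· ≤ ·)).map Q
        = [] ++ (((Iᶜ.filter (fun x => x < j)).sort (· ≤ ·)).map Q ++ [Q j])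
          ++ ((Iᶜ.filter (fun x => j < x)).sort (· ≤ ·)).map Q := by
      rw [aux_sort_split_mem Iᶜ hjIc]
      simp
    have hred2 := aux_infix R _ _ _ (hword2 ▸ hIw)
    have hp := aux_posA R _ (Q j) (hQ j) hred2
    rw [hrj, aux_prodQ_eq_piW]
    exact hp

end AuxFacet
open FiniteRootSystem in
/-- For adjacent facets `I`, `J` with `I∖{i} = J∖{j}`: the position `j` is the unique
position in the complement of `I` with `r(I,j) = ±r(I,i)`; moreover
`r(I,i) = r(I,j) ∈ Φ⁺` if `i < j`, while `r(I,i) = −r(I,j) ∈ Φ⁻` if `i > j`. -/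
theorem rootf_flip
    {V : Type*} [NormedAddCommGroup V] [InnerProductSpace ℝ V] [FiniteDimensional ℝ V]
    (R : FiniteRootSystem V) {m : ℕ} (Q : Fin m → V) (hQ : ∀ k, R.IsSimpleRoot (Q k))
    (ρ : V ≃ₗᵢ[ℝ] V) (hρ : ρ ∈ R.W)
    (I J : Finset (Fin m)) (hI : IsSCFacet R Q ρ I) (hJ : IsSCFacet R Q ρ J)
    (i j : Fin m) (hi : i ∈ I) (hj : j ∈ J) (hij : I.erase i = J.erase j) (hne : I ≠ J) :
    (j ∉ I ∧ (rootf Q I j = rootf Q I i ∨ rootf Q I j = -rootf Q I i) ∧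
      ∀ k : Fin m, k ∉ I →
        (rootf Q I k = rootf Q I i ∨ rootf Q I k = -rootf Q I i) → k = j) ∧
    (i < j → rootf Q I i = rootf Q I j ∧ rootf Q I i ∈ R.PosRoots) ∧
    (j < i → rootf Q I i = -rootf Q I j ∧ rootf Q I i ∈ R.NegRoots) := by
  classical
  have hij' : i ≠ j := by
    rintro rfl
    exact hne (by rw [← Finset.insert_erase hi, ← Finset.insert_erase hj, hij])
  have hjI : j ∉ I := by
    intro hjI'
    have h := Finset.mem_erase.mpr ⟨Ne.symm hij', hjI'⟩
    rw [hij] at h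
    exact (Finset.mem_erase.mp h).1 rfl
  have hjIc : j ∈ Iᶜ := Finset.mem_compl.mpr hjI
  have hJeq : J = insert j (I.erase i) := by
    rw [hij]
    exact (Finset.insert_erase hj).symm
  have hJc : Jᶜ = insert i (Iᶜ.erase j) := by
    ext x
    simp only [Finset.mem_compl, hJeq, Finset.mem_insert, Finset.mem_erase]
    push_neg
    constructor
    · rintro ⟨hx1, hx2⟩
      by_cases hxi : x = i
      · exact Or.inl hxi
      · exact Or.inr ⟨hx1, hx2 hxi⟩
    · rintro (rfl | ⟨hx1, hx2⟩)
      · exact ⟨hij', fun h => absurd rfl h⟩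
      · exact ⟨hx1, fun _ => hx2⟩
  have prodEq : prodQ Q Iᶜ = prodQ Q Jᶜ := hI.1.trans hJ.1.symm
  have hIw := aux_facet_word R Q hQ ρ I hI
  have hJw := aux_facet_word R Q hQ ρ J hJ
  rcases lt_trichotomy i j with hlt | heqq | hgt
  · obtain ⟨he, hpos⟩ := aux_core_lt R Q hQ hi hjIc hJc hlt prodEq hIw
    refine ⟨⟨hjI, Or.inl he.symm, ?_⟩, fun _ => ⟨he, by rw [he]; exact hpos⟩,
      fun hlt' => absurd hlt' (asymm hlt)⟩
    intro k hkI hk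
    by_contra hkj
    have hkIc : k ∈ Iᶜ := Finset.mem_compl.mpr hkI
    have hrefl : reflAlong (rootf Q I k) = reflAlong (rootf Q I j) := by
      rcases hk with h | h
      · rw [h, he]
      · rw [h, he, reflAlong_neg]
    rcases lt_trichotomy k j with h1 | h1 | h1
    · exact aux_rootf_inj R hIw hkIc hjIc h1 hrefl
    · exact hkj h1
    · exact aux_rootf_inj R hIw hjIc hkIc h1 hrefl.symm
  · exact absurd heqq hij'
  · obtain ⟨he, hpos⟩ := aux_core_gt R Q hQ hi hjIc hJc hgt prodEq hIw hJw
    refine ⟨⟨hjI, Or.inr (by rw [he, neg_neg]), ?_⟩,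
      fun hlt' => absurd hlt' (asymm hgt),
      fun _ => ⟨he, by rw [he]; exact aux_neg_of_pos R hpos⟩⟩
    intro k hkI hk
    by_contra hkj
    have hkIc : k ∈ Iᶜ := Finset.mem_compl.mpr hkI
    have hrefl : reflAlong (rootf Q I k) = reflAlong (rootf Q I j) := by
      rcases hk with h | h
      · rw [h, he, reflAlong_neg]
      · rw [h, he, neg_neg]
    rcases lt_trichotomy k j with h1 | h1 | h1
    · exact aux_rootf_inj R hIw hkIc hjIc h1 hrefl
    · exact hkj h1
    · exact aux_rootf_inj R hIw hjIc hkIc h1 hrefl.symm
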